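/- Let Ω = Ω(n,d,F) be the set of square n×n binary matrices with all row and column sums equal to d ∈ ℕ, d ≥ 2, nd ≥ 2, with forbidden entries F, and let λ_{|Ω|−1}^{edge} be the smallest eigenvalue of the edge-switch transition matrix P_edge (with ρ = nd). Then λ_{|Ω|−1}^{edge} ≥ −(1/d + 1/(4d²)), and consequently (1 + λ_{|Ω|−1}^{edge})^{-1} ≤ 4d²/(4d² − 4d − 1) ≤ 5/2. -/

import Mathlib

open Finset

attribute [local instance] Classical.propDecidable

/-- A binary `m × n` matrix, with `true` representing a `1` entry. -/
abbrev BinMat (m n : ℕ) := Fin m → Fin n → Bool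

/-- `A ∈ Ω(r,c,F)`: the binary matrix `A` has row sums `r`, column sums `c`, and is zero
on the forbidden entries `F`. -/
def inOmega {m n : ℕ} (r : Fin m → ℕ) (c : Fin n → ℕ) (F : Finset (Fin m × Fin n))
    (A : BinMat m n) : Prop :=
  (∀ i : Fin m, (univ.filter fun k => A i k = true).card = r i) ∧
  (∀ k : Fin n, (univ.filter fun i => A i k = true).card = c k) ∧
  ∀ p ∈ F, A p.1 p.2 = false

/-- `U_ij(A)`: columns with a `1` in row `i`, a `0` in row `j`, and `(j,k)` not forbidden. -/
def Uset {m n : ℕ} (F : Finset (Fin m × Fin n)) (i j : Fin m) (A : BinMat m n) :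
    Finset (Fin n) :=
  univ.filter fun k => A i k = true ∧ A j k = false ∧ (j, k) ∉ F

/-- `L_ij(A)`: columns with a `0` in row `i`, a `1` in row `j`, and `(i,k)` not forbidden. -/
def Lset {m n : ℕ} (F : Finset (Fin m × Fin n)) (i j : Fin m) (A : BinMat m n) :
    Finset (Fin n) :=
  univ.filter fun k => A i k = false ∧ A j k = true ∧ (i, k) ∉ F

/-- `u_ij(A) = |U_ij(A)|`. -/
def usize {m n : ℕ} (F : Finset (Fin m × Fin n)) (i j : Fin m) (A : BinMat m n) : ℕ :=
  (Uset F i j A).card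

/-- `l_ij(A) = |L_ij(A)|`. -/
def lsize {m n : ℕ} (F : Finset (Fin m × Fin n)) (i j : Fin m) (A : BinMat m n) : ℕ :=
  (Lset F i j A).card

/-- `B ∈ N_ij(A)`: `B ∈ Ω` and `B` agrees with `A` outside `{i,j} × (U_ij(A) ∪ L_ij(A))`. -/
def inNbhd {m n : ℕ} (r : Fin m → ℕ) (c : Fin n → ℕ) (F : Finset (Fin m × Fin n))
    (i j : Fin m) (A B : BinMat m n) : Prop :=
  inOmega r c F B ∧
  ∀ k l, (k, l) ∉ (({i, j} : Finset (Fin m)) ×ˢ (Uset F i j A ∪ Lset F i j A)) →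
    B k l = A k l

/-- `A` and `B` are switch-adjacent for rows `i, j`: `A - B` has exactly four nonzero
entries, all in rows `i` and `j`, and the columns containing them have no forbidden
entries in rows `i` and `j`. -/
def switchAdjIJ {m n : ℕ} (F : Finset (Fin m × Fin n)) (i j : Fin m)
    (A B : BinMat m n) : Prop :=
  ((univ : Finset (Fin m × Fin n)).filter fun p => A p.1 p.2 ≠ B p.1 p.2).card = 4 ∧
  (∀ p ∈ (univ : Finset (Fin m × Fin n)).filter fun p => A p.1 p.2 ≠ B p.1 p.2,
    p.1 = i ∨ p.1 = j) ∧
  ∀ p ∈ (univ : Finset (Fin m × Fin n)).filter fun p => A p.1 p.2 ≠ B p.1 p.2,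
    (i, p.2) ∉ F ∧ (j, p.2) ∉ F

/-- The pairs of rows `i < j`. -/
def rowPairs (m : ℕ) : Finset (Fin m × Fin m) :=
  univ.filter fun p => p.1 < p.2

/-- The state space `Ω(r,c,F)` as a type. -/
abbrev OmegaType {m n : ℕ} (r : Fin m → ℕ) (c : Fin n → ℕ) (F : Finset (Fin m × Fin n)) :=
  {A : BinMat m n // inOmega r c F A}

/-- Transition matrix of the Curveball chain on `Ω(r,c,F)`.  (For `A ≠ B` at most one
row pair `p` satisfies `B ∈ N_p(A)`, so the sum below has at most one nonzero term.) -/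
noncomputable def Pcurve {m n : ℕ} (r : Fin m → ℕ) (c : Fin n → ℕ)
    (F : Finset (Fin m × Fin n)) :
    Matrix (OmegaType r c F) (OmegaType r c F) ℝ :=
  Matrix.of fun A B =>
    if A = B then
      (m.choose 2 : ℝ)⁻¹ *
        ∑ p ∈ rowPairs m,
          (((usize F p.1 p.2 A.val + lsize F p.1 p.2 A.val).choose
            (usize F p.1 p.2 A.val) : ℝ))⁻¹
    else
      ∑ p ∈ rowPairs m,
        if inNbhd r c F p.1 p.2 A.val B.val then
          (m.choose 2 : ℝ)⁻¹ *
            (((usize F p.1 p.2 A.val + lsize F p.1 p.2 A.val).choose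
              (usize F p.1 p.2 A.val) : ℝ))⁻¹
        else 0

/-- Transition matrix of the edge-switch chain on `Ω(r,c,F)`, where `ρ` is the total
number of ones of each matrix in `Ω(r,c,F)`: each pair of distinct switch-adjacent
matrices has transition probability `C(ρ,2)⁻¹`. -/
noncomputable def Pedge {m n : ℕ} (r : Fin m → ℕ) (c : Fin n → ℕ)
    (F : Finset (Fin m × Fin n)) (ρ : ℕ) :
    Matrix (OmegaType r c F) (OmegaType r c F) ℝ :=
  Matrix.of fun A B =>
    if A = B then
      1 - ∑ _B' ∈ univ.filter (fun B' : OmegaType r c F =>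
            B' ≠ A ∧ ∃ p ∈ rowPairs m, switchAdjIJ F p.1 p.2 A.val B'.val),
          ((ρ.choose 2 : ℝ))⁻¹
    else if ∃ p ∈ rowPairs m, switchAdjIJ F p.1 p.2 A.val B.val then
      ((ρ.choose 2 : ℝ))⁻¹
    else 0


namespace S13

variable {n : ℕ}

/-- The set of positions where two matrices differ. -/
def dS (A B : BinMat n n) : Finset (Fin n × Fin n) :=
  univ.filter fun p => ¬ A p.1 p.2 = B p.1 p.2

lemma mem_dS {A B : BinMat n n} {p : Fin n × Fin n} :
    p ∈ dS A B ↔ ¬ A p.1 p.2 = B p.1 p.2 := by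
  simp [dS]

lemma sign_sum {m : ℕ} (f g : Fin m → Bool)
    (h : (univ.filter fun x => f x = true).card = (univ.filter fun x => g x = true).card) :
    ∑ x ∈ univ.filter (fun x => ¬ f x = g x), (if f x = true then (1:ℤ) else -1) = 0 := by
  have key : ∀ x : Fin m,
      (if ¬ f x = g x then (if f x = true then (1:ℤ) else -1) else 0)
        = (if f x = true then (1:ℤ) else 0) - (if g x = true then (1:ℤ) else 0) := by
    intro x; cases hf : f x <;> cases hg : g x <;> simp [hf, hg]
  rw [Finset.sum_filter]
  calc ∑ x : Fin m, (if ¬ f x = g x then (if f x = true then (1:ℤ) else -1) else 0)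
      = ∑ x : Fin m, ((if f x = true then (1:ℤ) else 0) - (if g x = true then (1:ℤ) else 0)) := by
        exact Finset.sum_congr rfl fun x _ => key x
    _ = (∑ x : Fin m, (if f x = true then (1:ℤ) else 0))
        - ∑ x : Fin m, (if g x = true then (1:ℤ) else 0) := Finset.sum_sub_distrib _ _
    _ = ((univ.filter fun x => f x = true).card : ℤ)
        - ((univ.filter fun x => g x = true).card : ℤ) := by
        rw [Finset.sum_boole, Finset.sum_boole]
    _ = 0 := by rw [h]; ring

lemma diff_single {m : ℕ} (f g : Fin m → Bool)
    (h : (univ.filter fun x => f x = true).card = (univ.filter fun x => g x = true).card)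
    {a : Fin m} (hset : univ.filter (fun x => ¬ f x = g x) = {a}) : False := by
  have := sign_sum f g h
  rw [hset, Finset.sum_singleton] at this
  by_cases hf : f a = true <;> simp [hf] at this

lemma diff_pair {m : ℕ} (f g : Fin m → Bool)
    (h : (univ.filter fun x => f x = true).card = (univ.filter fun x => g x = true).card)
    {a b : Fin m} (hab : a ≠ b)
    (hset : univ.filter (fun x => ¬ f x = g x) = {a, b}) : ¬ f a = f b := by
  have hs := sign_sum f g h
  rw [hset, Finset.sum_insert (by simp [hab]), Finset.sum_singleton] at hs
  intro hEq
  by_cases hf : f a = true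
  · have hfb : f b = true := by rw [← hEq]; exact hf
    rw [if_pos hf, if_pos hfb] at hs; omega
  · have hfb : ¬ f b = true := fun hh => hf (by rw [hEq]; exact hh)
    rw [if_neg hf, if_neg hfb] at hs; omega


lemma bool_flip {a b : Bool} (h : ¬ a = b) : b = ! a := by cases a <;> cases b <;> simp_all

/-- Structure of a switch difference: two matrices in `Ω` differing in exactly 4 entries,
all in rows `i ≠ j`, differ in a 2×2 switch pattern. -/
lemma structure_lemma {d : ℕ} {F : Finset (Fin n × Fin n)} {A B : BinMat n n}
    (hA : inOmega (fun _ : Fin n => d) (fun _ : Fin n => d) F A)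
    (hB : inOmega (fun _ : Fin n => d) (fun _ : Fin n => d) F B)
    {i j : Fin n} (hij : i ≠ j)
    (hcard : (dS A B).card = 4)
    (hrows : ∀ p ∈ dS A B, p.1 = i ∨ p.1 = j) :
    ∃ kk : Fin n × Fin n, kk.1 ≠ kk.2 ∧
      A i kk.1 = true ∧ A j kk.1 = false ∧ A i kk.2 = false ∧ A j kk.2 = true ∧
      B i kk.1 = false ∧ B j kk.1 = true ∧ B i kk.2 = true ∧ B j kk.2 = false ∧
      dS A B = {(i,kk.1), (j,kk.1), (i,kk.2), (j,kk.2)} := by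
  have hcol : ∀ s, (¬ A i s = B i s) ↔ (¬ A j s = B j s) := by
    intro s
    constructor
    · intro hi; by_contra hj
      refine diff_single (fun r => A r s) (fun r => B r s)
        (by rw [hA.2.1 s, hB.2.1 s]) (a := i) ?_
      ext r
      simp only [Finset.mem_filter, Finset.mem_univ, true_and, Finset.mem_singleton]
      constructor
      · intro hr
        rcases hrows ⟨r, s⟩ (mem_dS.mpr hr) with h | h
        · exact h
        · exact absurd hj (h ▸ hr)
      · intro hr; subst hr; exact hi
    · intro hj; by_contra hi
      refine diff_single (fun r => A r s) (fun r => B r s)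
        (by rw [hA.2.1 s, hB.2.1 s]) (a := j) ?_
      ext r
      simp only [Finset.mem_filter, Finset.mem_univ, true_and, Finset.mem_singleton]
      constructor
      · intro hr
        rcases hrows ⟨r, s⟩ (mem_dS.mpr hr) with h | h
        · exact absurd hi (h ▸ hr)
        · exact h
      · intro hr; subst hr; exact hj
  classical
  set K : Finset (Fin n) := univ.filter (fun s => ¬ A i s = B i s) with hK
  have hdiff_eq : dS A B = ({i, j} : Finset (Fin n)) ×ˢ K := by
    ext ⟨r, s⟩
    simp only [mem_dS, Finset.mem_product, Finset.mem_insert, Finset.mem_singleton, hK,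
      Finset.mem_filter, Finset.mem_univ, true_and]
    constructor
    · intro hr
      refine ⟨hrows ⟨r, s⟩ (mem_dS.mpr hr), ?_⟩
      rcases hrows ⟨r, s⟩ (mem_dS.mpr hr) with h | h
      · rw [← h]; exact hr
      · exact (hcol s).mpr (by rw [← h]; exact hr)
    · rintro ⟨h1 | h1, h2⟩
      · subst h1; exact h2
      · subst h1; exact (hcol s).mp h2
  have hij2 : ({i, j} : Finset (Fin n)).card = 2 := by
    rw [Finset.card_insert_of_notMem (by simpa using hij), Finset.card_singleton]
  have hKcard : K.card = 2 := by
    have h4 : 2 * K.card = 4 := by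
      rw [← hij2, ← Finset.card_product, ← hdiff_eq, hcard]
    omega
  obtain ⟨k₀, k₁, hk01, hKeq⟩ := Finset.card_eq_two.mp hKcard
  have hcolset : ∀ s ∈ K, univ.filter (fun r => ¬ A r s = B r s) = ({i, j} : Finset (Fin n)) := by
    intro s hs
    ext r
    simp only [Finset.mem_filter, Finset.mem_univ, true_and, Finset.mem_insert,
      Finset.mem_singleton]
    constructor
    · intro hr; exact hrows ⟨r, s⟩ (mem_dS.mpr hr)
    · rintro (h | h)
      · subst h; rw [hK] at hs; simpa using hs
      · subst h; exact (hcol s).mp (by rw [hK] at hs; simpa using hs)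
  have hcolpar : ∀ s ∈ K, ¬ A i s = A j s := fun s hs =>
    diff_pair (fun r => A r s) (fun r => B r s) (by rw [hA.2.1 s, hB.2.1 s]) hij (hcolset s hs)
  have hBval : ∀ r s, ¬ A r s = B r s → B r s = ! A r s := fun r s h => bool_flip h
  have main : ∀ a b : Fin n, a ≠ b → K = {a, b} → A i a = true →
      ∃ kk : Fin n × Fin n, kk.1 ≠ kk.2 ∧
      A i kk.1 = true ∧ A j kk.1 = false ∧ A i kk.2 = false ∧ A j kk.2 = true ∧
      B i kk.1 = false ∧ B j kk.1 = true ∧ B i kk.2 = true ∧ B j kk.2 = false ∧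
      dS A B = {(i,kk.1), (j,kk.1), (i,kk.2), (j,kk.2)} := by
    intro a b hab hKab hAia
    have haK : a ∈ K := by rw [hKab]; simp
    have hbK : b ∈ K := by rw [hKab]; simp
    have hrowp : ¬ A i a = A i b :=
      diff_pair (A i) (B i) (by rw [hA.1 i, hB.1 i]) hab (by rw [← hK]; exact hKab)
    have hAib : A i b = false := by
      cases hb : A i b
      · rfl
      · exact absurd (by rw [hAia, hb]) hrowp
    have hAja : A j a = false := by
      have := hcolpar a haK
      cases hja : A j a
      · rfl
      · exact absurd (by rw [hAia, hja]) this
    have hAjb : A j b = true := by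
      have := hcolpar b hbK
      cases hjb : A j b
      · exact absurd (by rw [hAib, hjb]) this
      · rfl
    have hdia : ¬ A i a = B i a := by rw [hK] at haK; simpa using haK
    have hdib : ¬ A i b = B i b := by rw [hK] at hbK; simpa using hbK
    have hdja : ¬ A j a = B j a := (hcol a).mp hdia
    have hdjb : ¬ A j b = B j b := (hcol b).mp hdib
    refine ⟨(a, b), hab, hAia, hAja, hAib, hAjb, ?_, ?_, ?_, ?_, ?_⟩
    · rw [hBval _ _ hdia, hAia]; rfl
    · rw [hBval _ _ hdja, hAja]; rfl
    · rw [hBval _ _ hdib, hAib]; rfl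
    · rw [hBval _ _ hdjb, hAjb]; rfl
    · rw [hdiff_eq, hKab]
      ext ⟨r, s⟩
      simp only [Finset.mem_product, Finset.mem_insert, Finset.mem_singleton, Prod.mk.injEq]
      tauto
  cases hA0 : A i k₀
  · have hA1 : A i k₁ = true := by
      have hrowp : ¬ A i k₀ = A i k₁ :=
        diff_pair (A i) (B i) (by rw [hA.1 i, hB.1 i]) hk01 (by rw [← hK]; exact hKeq)
      cases h1 : A i k₁
      · exact absurd (by rw [hA0, h1]) hrowp
      · rfl
    exact main k₁ k₀ hk01.symm (by rw [hKeq]; exact Finset.pair_comm k₀ k₁) hA1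
  · exact main k₀ k₁ hk01 hKeq hA0

variable {d : ℕ} {F : Finset (Fin n × Fin n)}

lemma dS_eq (A B : BinMat n n) :
    (univ.filter fun p : Fin n × Fin n => A p.1 p.2 ≠ B p.1 p.2) = dS A B := rfl

/-- Full structure of a switch-adjacency. -/
lemma adj_structure {A B : BinMat n n}
    (hA : inOmega (fun _ : Fin n => d) (fun _ : Fin n => d) F A)
    (hB : inOmega (fun _ : Fin n => d) (fun _ : Fin n => d) F B)
    {i j : Fin n} (hij : i ≠ j) (hadj : switchAdjIJ F i j A B) :
    ∃ kk : Fin n × Fin n, kk.1 ≠ kk.2 ∧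
      kk.1 ∈ Uset F i j A ∧ kk.2 ∈ Lset F i j A ∧
      B i kk.1 = false ∧ B j kk.1 = true ∧ B i kk.2 = true ∧ B j kk.2 = false ∧
      (∀ r s, ¬ ((r = i ∨ r = j) ∧ (s = kk.1 ∨ s = kk.2)) → B r s = A r s) ∧
      A i kk.1 = true ∧ A j kk.1 = false ∧ A i kk.2 = false ∧ A j kk.2 = true ∧
      kk.1 ∈ Uset F j i B ∧
      dS A B = {(i,kk.1), (j,kk.1), (i,kk.2), (j,kk.2)} := by
  have hcard : (dS A B).card = 4 := by rw [← dS_eq]; exact hadj.1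
  have hrows : ∀ p ∈ dS A B, p.1 = i ∨ p.1 = j := by
    intro p hp; exact hadj.2.1 p (by rw [dS_eq]; exact hp)
  obtain ⟨kk, hkk, hAik, hAjk, hAik', hAjk', hBik, hBjk, hBik', hBjk', hdS⟩ :=
    structure_lemma hA hB hij hcard hrows
  have hFk : (i, kk.1) ∉ F ∧ (j, kk.1) ∉ F := by
    refine hadj.2.2 (i, kk.1) ?_
    rw [dS_eq, hdS]; simp
  have hFk' : (i, kk.2) ∉ F ∧ (j, kk.2) ∉ F := by
    refine hadj.2.2 (i, kk.2) ?_
    rw [dS_eq, hdS]; simp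
  refine ⟨kk, hkk, ?_, ?_, hBik, hBjk, hBik', hBjk', ?_, hAik, hAjk, hAik', hAjk', ?_, hdS⟩
  · simp only [Uset, Finset.mem_filter, Finset.mem_univ, true_and]
    exact ⟨hAik, hAjk, hFk.2⟩
  · simp only [Lset, Finset.mem_filter, Finset.mem_univ, true_and]
    exact ⟨hAik', hAjk', hFk'.1⟩
  · intro r s hrs
    have : (r, s) ∉ dS A B := by
      rw [hdS]; simp only [Finset.mem_insert, Finset.mem_singleton, Prod.mk.injEq]
      tauto
    rw [mem_dS] at this
    exact (not_not.mp this).symm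
  · simp only [Uset, Finset.mem_filter, Finset.mem_univ, true_and]
    exact ⟨hBjk, hBik, hFk.1⟩

/-- The row pair of a switch-adjacency is unique. -/
lemma rowpair_unique {A B : BinMat n n}
    (hA : inOmega (fun _ : Fin n => d) (fun _ : Fin n => d) F A)
    (hB : inOmega (fun _ : Fin n => d) (fun _ : Fin n => d) F B)
    {i j i' j' : Fin n} (hij : i < j) (hij' : i' < j')
    (h1 : switchAdjIJ F i j A B) (h2 : switchAdjIJ F i' j' A B) :
    i = i' ∧ j = j' := by
  obtain ⟨kk, hkk, _, _, _, _, _, _, _, _, _, _, _, _, hdS⟩ :=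
    adj_structure hA hB hij.ne h1
  have hi : i = i' ∨ i = j' := by
    have : (i, kk.1) ∈ dS A B := by rw [hdS]; simp
    exact h2.2.1 (i, kk.1) (by rw [dS_eq]; exact this)
  have hj : j = i' ∨ j = j' := by
    have : (j, kk.1) ∈ dS A B := by rw [hdS]; simp
    exact h2.2.1 (j, kk.1) (by rw [dS_eq]; exact this)
  rcases hi with hi | hi
  · refine ⟨hi, ?_⟩
    rcases hj with hj | hj
    · exact absurd (hi ▸ hj ▸ hij) (lt_irrefl _)
    · exact hj
  · exfalso
    rcases hj with hj | hj
    · exact absurd (hij.trans (hj ▸ hij')) (by rw [hi]; exact lt_irrefl _)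
    · exact absurd (hj ▸ hij) (by rw [hi]; exact lt_irrefl _)

lemma usize_le {A : BinMat n n}
    (hA : inOmega (fun _ : Fin n => d) (fun _ : Fin n => d) F A) (i j : Fin n) :
    usize F i j A ≤ d := by
  have : Uset F i j A ⊆ univ.filter (fun k => A i k = true) := by
    intro k hk
    simp only [Uset, Finset.mem_filter, Finset.mem_univ, true_and] at hk ⊢
    exact hk.1
  have h := Finset.card_le_card this
  rw [hA.1 i] at h
  exact h

lemma lsize_le {A : BinMat n n}
    (hA : inOmega (fun _ : Fin n => d) (fun _ : Fin n => d) F A) (i j : Fin n) :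
    lsize F i j A ≤ d := by
  have : Lset F i j A ⊆ univ.filter (fun k => A j k = true) := by
    intro k hk
    simp only [Lset, Finset.mem_filter, Finset.mem_univ, true_and] at hk ⊢
    exact hk.2.1
  have h := Finset.card_le_card this
  rw [hA.1 j] at h
  exact h

/-- Neighbours of `A` via a switch on rows `i, j`. -/
noncomputable def nbrP (F : Finset (Fin n × Fin n)) (d : ℕ) (i j : Fin n)
    (A : OmegaType (fun _ : Fin n => d) (fun _ : Fin n => d) F) :
    Finset (OmegaType (fun _ : Fin n => d) (fun _ : Fin n => d) F) :=
  univ.filter fun B => B ≠ A ∧ switchAdjIJ F i j A.val B.val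

lemma card_nbrP_le {i j : Fin n} (hij : i ≠ j)
    (A : OmegaType (fun _ : Fin n => d) (fun _ : Fin n => d) F) :
    (nbrP F d i j A).card ≤ usize F i j A.val * lsize F i j A.val := by
  classical
  have hcard : ((Uset F i j A.val) ×ˢ (Lset F i j A.val)).card
      = usize F i j A.val * lsize F i j A.val := by
    rw [Finset.card_product]; rfl
  rw [← hcard]
  set f : OmegaType (fun _ : Fin n => d) (fun _ : Fin n => d) F → Fin n × Fin n :=
    fun B => if h : switchAdjIJ F i j A.val B.val then
      Classical.choose (adj_structure A.2 B.2 hij h) else (i, i) with hf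
  apply Finset.card_le_card_of_injOn f
  · intro B hB
    rw [Finset.mem_coe] at hB
    simp only [nbrP, Finset.mem_filter, Finset.mem_univ, true_and] at hB
    rw [hf]; simp only [dif_pos hB.2]
    obtain ⟨_, hU, hL, _⟩ := Classical.choose_spec (adj_structure A.2 B.2 hij hB.2)
    exact Finset.mem_product.mpr ⟨hU, hL⟩
  · intro B₁ hB₁ B₂ hB₂ hfeq
    simp only [Finset.coe_filter, Set.mem_setOf_eq, nbrP, Finset.mem_univ, true_and] at hB₁ hB₂
    obtain ⟨h1ne, h1⟩ := hB₁
    obtain ⟨h2ne, h2⟩ := hB₂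
    rw [hf] at hfeq
    simp only [dif_pos h1, dif_pos h2] at hfeq
    obtain ⟨hkk1, _, _, hB1ik, hB1jk, hB1ik', hB1jk', hoff1, _⟩ :=
      Classical.choose_spec (adj_structure A.2 B₁.2 hij h1)
    obtain ⟨hkk2, _, _, hB2ik, hB2jk, hB2ik', hB2jk', hoff2, _⟩ :=
      Classical.choose_spec (adj_structure A.2 B₂.2 hij h2)
    set kk := Classical.choose (adj_structure A.2 B₁.2 hij h1) with hkkdef
    rw [← hfeq] at hB2ik hB2jk hB2ik' hB2jk' hoff2
    apply Subtype.ext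
    funext r s
    by_cases hc : (r = i ∨ r = j) ∧ (s = kk.1 ∨ s = kk.2)
    · obtain ⟨hr | hr, hs | hs⟩ := hc <;> subst hr <;> subst hs
      · rw [hB1ik, hB2ik]
      · rw [hB1ik', hB2ik']
      · rw [hB1jk, hB2jk]
      · rw [hB1jk', hB2jk']
    · rw [hoff1 r s hc, hoff2 r s hc]

/-- Token: move the `1` of row `i`, column `k` to row `j`, column `k`. -/
def token (A : BinMat n n) (i j k : Fin n) : BinMat n n :=
  fun r s => if r = i ∧ s = k then false else if r = j ∧ s = k then true else A r s

lemma token_apply_other {A : BinMat n n} {i j k r s : Fin n}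
    (h1 : ¬ (r = i ∧ s = k)) (h2 : ¬ (r = j ∧ s = k)) : token A i j k r s = A r s := by
  simp [token, h1, h2]

lemma token_ik {A : BinMat n n} {i j k : Fin n} : token A i j k i k = false := by
  simp [token]

lemma token_jk {A : BinMat n n} {i j k : Fin n} (hij : i ≠ j) : token A i j k j k = true := by
  simp [token, hij.symm]

/-- A common token between two distinct states forces switch-adjacency. -/
lemma common_token_adj {A B : BinMat n n}
    (hA : inOmega (fun _ : Fin n => d) (fun _ : Fin n => d) F A)
    (hB : inOmega (fun _ : Fin n => d) (fun _ : Fin n => d) F B)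
    {i j : Fin n} (hij : i ≠ j) (hne : A ≠ B) {k₁ k₂ : Fin n}
    (h1 : k₁ ∈ Uset F i j A) (h2 : k₂ ∈ Uset F i j B)
    (heq : token A i j k₁ = token B i j k₂) :
    switchAdjIJ F i j A B ∧ B i k₁ = false ∧ A i k₂ = false ∧
      dS A B = {(i,k₁), (j,k₁), (i,k₂), (j,k₂)} := by
  simp only [Uset, Finset.mem_filter, Finset.mem_univ, true_and] at h1 h2
  obtain ⟨hA1, hA2, hF1⟩ := h1
  obtain ⟨hB1, hB2, hF2⟩ := h2
  have happ : ∀ r s, token A i j k₁ r s = token B i j k₂ r s :=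
    fun r s => congrFun (congrFun heq r) s
  have hk12 : k₁ ≠ k₂ := by
    intro h; subst h
    apply hne; funext r s
    by_cases hc1 : r = i ∧ s = k₁
    · obtain ⟨hr, hs⟩ := hc1; subst hr; subst hs; rw [hA1, hB1]
    · by_cases hc2 : r = j ∧ s = k₁
      · obtain ⟨hr, hs⟩ := hc2; subst hr; subst hs; rw [hA2, hB2]
      · rw [← token_apply_other (A := A) hc1 hc2, happ, token_apply_other hc1 hc2]
  have hBik1 : B i k₁ = false := by
    have h := happ i k₁
    rw [token_ik, token_apply_other (by simp [hk12]) (by simp [hij])] at h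
    exact h.symm
  have hBjk1 : B j k₁ = true := by
    have h := happ j k₁
    rw [token_jk hij, token_apply_other (by simp [hij.symm]) (by simp [hk12])] at h
    exact h.symm
  have hAik2 : A i k₂ = false := by
    have h := happ i k₂
    rw [token_ik (A := B), token_apply_other (by simp [hk12.symm]) (by simp [hij])] at h
    exact h
  have hAjk2 : A j k₂ = true := by
    have h := happ j k₂
    rw [token_jk (A := B) hij, token_apply_other (by simp [hij.symm]) (by simp [hk12.symm])] at h
    exact h
  have hoff : ∀ r s, ¬ ((r = i ∨ r = j) ∧ (s = k₁ ∨ s = k₂)) → A r s = B r s := by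
    intro r s hc
    rw [← token_apply_other (A := A) (i := i) (j := j) (k := k₁) (by tauto) (by tauto), happ,
      token_apply_other (by tauto) (by tauto)]
  have hdSeq : dS A B = {(i,k₁), (j,k₁), (i,k₂), (j,k₂)} := by
    ext ⟨r, s⟩
    simp only [mem_dS, Finset.mem_insert, Finset.mem_singleton, Prod.mk.injEq]
    constructor
    · intro hr
      by_contra hmem
      push_neg at hmem
      exact hr (hoff r s (by tauto))
    · rintro (⟨hr, hs⟩ | ⟨hr, hs⟩ | ⟨hr, hs⟩ | ⟨hr, hs⟩) <;> subst hr <;> subst hs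
      · rw [hA1, hBik1]; simp
      · rw [hA2, hBjk1]; simp
      · rw [hAik2, hB1]; simp
      · rw [hAjk2, hB2]; simp
  have hcard4 : ({((i:Fin n),(k₁:Fin n)), (j,k₁), (i,k₂), (j,k₂)} : Finset (Fin n × Fin n)).card = 4 := by
    rw [Finset.card_insert_of_notMem (by simp [Prod.ext_iff, hij, hk12]),
      Finset.card_insert_of_notMem (by simp [Prod.ext_iff, hij.symm, hk12]),
      Finset.card_insert_of_notMem (by simp [Prod.ext_iff, hij]),
      Finset.card_singleton]
  have hFik1 : (i, k₁) ∉ F := fun hF => by simp [hA.2.2 _ hF] at hA1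
  have hFik2 : (i, k₂) ∉ F := fun hF => by simp [hB.2.2 _ hF] at hB1
  refine ⟨⟨?_, ?_, ?_⟩, hBik1, hAik2, hdSeq⟩
  · rw [dS_eq, hdSeq]; exact hcard4
  · intro p hp
    rw [dS_eq, hdSeq] at hp
    simp only [Finset.mem_insert, Finset.mem_singleton] at hp
    rcases hp with h | h | h | h <;> subst h <;> simp
  · intro p hp
    rw [dS_eq, hdSeq] at hp
    simp only [Finset.mem_insert, Finset.mem_singleton] at hp
    rcases hp with h | h | h | h <;> subst h <;> exact ⟨by assumption, by assumption⟩

/-- `A` emits token `t`. -/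
def chi (F : Finset (Fin n × Fin n)) (d : ℕ) (i j : Fin n)
    (A : OmegaType (fun _ : Fin n => d) (fun _ : Fin n => d) F) (t : BinMat n n) : Prop :=
  ∃ k ∈ Uset F i j A.val, t = token A.val i j k

/-- Number of common tokens. -/
noncomputable def wt (F : Finset (Fin n × Fin n)) (d : ℕ) (i j : Fin n)
    (A B : OmegaType (fun _ : Fin n => d) (fun _ : Fin n => d) F) : ℕ :=
  (univ.filter fun t : BinMat n n => chi F d i j A t ∧ chi F d i j B t).card

lemma token_injOn {A : BinMat n n} {i j : Fin n} (hij : i ≠ j) {k₁ k₂ : Fin n}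
    (h1 : k₁ ∈ Uset F i j A) (heq : token A i j k₁ = token A i j k₂) : k₁ = k₂ := by
  by_contra hk
  simp only [Uset, Finset.mem_filter, Finset.mem_univ, true_and] at h1
  have h := congrFun (congrFun heq i) k₁
  rw [token_ik, token_apply_other (by simp [hk]) (by simp [hij])] at h
  rw [h1.1] at h; exact Bool.noConfusion h

lemma wt_diag (i j : Fin n) (hij : i ≠ j)
    (A : OmegaType (fun _ : Fin n => d) (fun _ : Fin n => d) F) :
    wt F d i j A A = usize F i j A.val := by
  classical
  have hset : (univ.filter fun t : BinMat n n => chi F d i j A t ∧ chi F d i j A t)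
      = (Uset F i j A.val).image (fun k => token A.val i j k) := by
    ext t
    simp only [Finset.mem_filter, Finset.mem_univ, true_and, and_self, Finset.mem_image, chi]
    constructor
    · rintro ⟨k, hk, rfl⟩; exact ⟨k, hk, rfl⟩
    · rintro ⟨k, hk, rfl⟩; exact ⟨k, hk, rfl⟩
  rw [wt, hset, Finset.card_image_of_injOn (fun k₁ hk₁ k₂ _ h => token_injOn hij hk₁ h)]
  rfl

lemma wt_non_adj {i j : Fin n} (hij : i ≠ j)
    {A B : OmegaType (fun _ : Fin n => d) (fun _ : Fin n => d) F} (hne : B ≠ A)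
    (hnadj : B ∉ nbrP F d i j A) : wt F d i j A B = 0 := by
  rw [wt, Finset.card_eq_zero]
  rw [Finset.filter_eq_empty_iff]
  rintro t - ⟨⟨k₁, hk₁, rfl⟩, ⟨k₂, hk₂, heq⟩⟩
  have hvne : A.val ≠ B.val := fun h => hne (Subtype.ext h.symm)
  have hct := common_token_adj A.2 B.2 hij hvne hk₁ hk₂ heq
  exact hnadj (Finset.mem_filter.mpr ⟨Finset.mem_univ _, hne, hct.1⟩)

lemma wt_adj {i j : Fin n} (hij : i ≠ j)
    {A B : OmegaType (fun _ : Fin n => d) (fun _ : Fin n => d) F}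
    (hadj : B ∈ nbrP F d i j A) : wt F d i j A B = 1 := by
  classical
  simp only [nbrP, Finset.mem_filter, Finset.mem_univ, true_and] at hadj
  obtain ⟨hne, hsw⟩ := hadj
  obtain ⟨kk, hkk, hU, hL, hBik, hBjk, hBik', hBjk', hoff, hAik, hAjk, hAik', hAjk', hUB, hdS⟩ :=
    adj_structure A.2 B.2 hij hsw
  have hvne : A.val ≠ B.val := by
    intro h
    have h4 : (dS A.val B.val).card = 4 := by rw [← dS_eq]; exact hsw.1
    have h0 : dS A.val B.val = ∅ := by
      ext p; simp [mem_dS, h]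
    rw [h0] at h4; simp at h4
  simp only [Lset, Finset.mem_filter, Finset.mem_univ, true_and] at hL
  have hFjk2 : (j, kk.2) ∉ F := fun hF => by simp [A.2.2.2 _ hF] at hAjk'
  have hk2UB : kk.2 ∈ Uset F i j B.val := by
    simp only [Uset, Finset.mem_filter, Finset.mem_univ, true_and]
    exact ⟨hBik', hBjk', hFjk2⟩
  have hsingle : (univ.filter fun t : BinMat n n => chi F d i j A t ∧ chi F d i j B t)
      = {token A.val i j kk.1} := by
    ext t
    simp only [Finset.mem_filter, Finset.mem_univ, true_and, Finset.mem_singleton]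
    constructor
    · rintro ⟨⟨k₁, hk₁, rfl⟩, ⟨k₂, hk₂, heq⟩⟩
      obtain ⟨-, hBik1, hAik2, hdS'⟩ :=
        common_token_adj A.2 B.2 hij hvne hk₁ hk₂ heq
      have hmem : (i, k₁) ∈ dS A.val B.val := by
        rw [hdS']; simp
      rw [hdS] at hmem
      simp only [Finset.mem_insert, Finset.mem_singleton, Prod.mk.injEq] at hmem
      simp only [Uset, Finset.mem_filter, Finset.mem_univ, true_and] at hk₁
      have hk1eq : k₁ = kk.1 := by
        rcases hmem with ⟨-, h⟩ | ⟨h, -⟩ | ⟨-, h⟩ | ⟨h, -⟩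
        · exact h
        · exact absurd h hij
        · rw [h] at hk₁; rw [hk₁.1] at hAik'; exact Bool.noConfusion hAik'
        · exact absurd h hij
      rw [hk1eq]
    · rintro rfl
      constructor
      · exact ⟨kk.1, hU, rfl⟩
      · refine ⟨kk.2, hk2UB, ?_⟩
        funext r s
        by_cases hc : (r = i ∨ r = j) ∧ (s = kk.1 ∨ s = kk.2)
        · obtain ⟨hr | hr, hs | hs⟩ := hc <;> subst hr <;> subst hs
          · rw [token_ik, token_apply_other (by simp [hkk]) (by simp [hij]), hBik]
          · rw [token_apply_other (by simp [hkk.symm]) (by simp [hij]), hAik', token_ik]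
          · rw [token_jk hij, token_apply_other (by simp [hij.symm]) (by simp [hkk]), hBjk]
          · rw [token_apply_other (by simp [hij.symm]) (by simp [hkk.symm]), hAjk', token_jk hij]
        · rw [token_apply_other (by tauto) (by tauto), token_apply_other (by tauto) (by tauto)]
          exact (hoff r s hc).symm
  rw [wt, hsingle, Finset.card_singleton]

/-- Positivity of the Gram matrix `D_u + Adj_{ij}`. -/
lemma gram {i j : Fin n} (hij : i ≠ j)
    (v : OmegaType (fun _ : Fin n => d) (fun _ : Fin n => d) F → ℝ) :
    0 ≤ ∑ A : OmegaType (fun _ : Fin n => d) (fun _ : Fin n => d) F,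
          (usize F i j A.val : ℝ) * (v A * v A)
        + ∑ A : OmegaType (fun _ : Fin n => d) (fun _ : Fin n => d) F,
            ∑ B ∈ nbrP F d i j A, v A * v B := by
  classical
  have expand : ∀ t : BinMat n n,
      (∑ A : OmegaType (fun _ : Fin n => d) (fun _ : Fin n => d) F,
        if chi F d i j A t then v A else 0)^2
      = ∑ A : OmegaType (fun _ : Fin n => d) (fun _ : Fin n => d) F,
          ∑ B : OmegaType (fun _ : Fin n => d) (fun _ : Fin n => d) F,
            (if chi F d i j A t ∧ chi F d i j B t then v A * v B else 0) := by
    intro t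
    rw [sq, Finset.sum_mul_sum]
    refine Finset.sum_congr rfl fun A _ => Finset.sum_congr rfl fun B _ => ?_
    by_cases hA : chi F d i j A t <;> by_cases hB : chi F d i j B t <;> simp [hA, hB]
  have inner : ∀ A B : OmegaType (fun _ : Fin n => d) (fun _ : Fin n => d) F,
      (∑ t : BinMat n n, if chi F d i j A t ∧ chi F d i j B t then v A * v B else 0)
      = (wt F d i j A B : ℝ) * (v A * v B) := by
    intro A B
    rw [← Finset.sum_filter, Finset.sum_const, nsmul_eq_mul]
    rfl
  have key : ∑ t : BinMat n n,
      (∑ A : OmegaType (fun _ : Fin n => d) (fun _ : Fin n => d) F,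
        if chi F d i j A t then v A else 0)^2
      = ∑ A : OmegaType (fun _ : Fin n => d) (fun _ : Fin n => d) F,
          (usize F i j A.val : ℝ) * (v A * v A)
        + ∑ A : OmegaType (fun _ : Fin n => d) (fun _ : Fin n => d) F,
            ∑ B ∈ nbrP F d i j A, v A * v B := by
    rw [Finset.sum_congr rfl (fun t _ => expand t), Finset.sum_comm, ← Finset.sum_add_distrib]
    refine Finset.sum_congr rfl fun A _ => ?_
    rw [Finset.sum_comm]
    have step : ∀ B : OmegaType (fun _ : Fin n => d) (fun _ : Fin n => d) F,
        (∑ t : BinMat n n, if chi F d i j A t ∧ chi F d i j B t then v A * v B else 0)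
        = (wt F d i j A B : ℝ) * (v A * v B) := inner A
    rw [Finset.sum_congr rfl (fun B _ => step B)]
    rw [← Finset.sum_erase_add _ _ (Finset.mem_univ A), wt_diag i j hij A]
    have herase : ∑ B ∈ univ.erase A, (wt F d i j A B : ℝ) * (v A * v B)
        = ∑ B ∈ nbrP F d i j A, v A * v B := by
      have hcong : ∀ B ∈ univ.erase A,
          (wt F d i j A B : ℝ) * (v A * v B)
          = if B ∈ nbrP F d i j A then v A * v B else 0 := by
        intro B hB
        have hBne : B ≠ A := (Finset.mem_erase.mp hB).1
        by_cases hmem : B ∈ nbrP F d i j A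
        · rw [wt_adj hij hmem, if_pos hmem]; norm_num
        · rw [wt_non_adj hij hBne hmem, if_neg hmem]; norm_num
      rw [Finset.sum_congr rfl hcong, Finset.sum_ite_mem]
      congr 1
      refine Finset.inter_eq_right.mpr ?_
      intro B hB
      exact Finset.mem_erase.mpr ⟨(Finset.mem_filter.mp hB).2.1, Finset.mem_univ B⟩
    rw [herase]
    ring
  rw [← key]
  exact Finset.sum_nonneg fun t _ => sq_nonneg _

lemma nbrP_disj (A : OmegaType (fun _ : Fin n => d) (fun _ : Fin n => d) F) :
    ∀ p ∈ rowPairs n, ∀ q ∈ rowPairs n, p ≠ q →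
      Disjoint (nbrP F d p.1 p.2 A) (nbrP F d q.1 q.2 A) := by
  intro p hp q hq hpq
  rw [Finset.disjoint_left]
  intro B hBp hBq
  simp only [nbrP, Finset.mem_filter, Finset.mem_univ, true_and] at hBp hBq
  have hp' : p.1 < p.2 := (Finset.mem_filter.mp hp).2
  have hq' : q.1 < q.2 := (Finset.mem_filter.mp hq).2
  have := rowpair_unique A.2 B.2 hp' hq' hBp.2 hBq.2
  exact hpq (Prod.ext this.1 this.2)

lemma nbr_eq_biUnion (A : OmegaType (fun _ : Fin n => d) (fun _ : Fin n => d) F) :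
    (univ.filter fun B : OmegaType (fun _ : Fin n => d) (fun _ : Fin n => d) F =>
        B ≠ A ∧ ∃ p ∈ rowPairs n, switchAdjIJ F p.1 p.2 A.val B.val)
    = (rowPairs n).biUnion (fun p => nbrP F d p.1 p.2 A) := by
  ext B
  simp only [Finset.mem_filter, Finset.mem_univ, true_and, Finset.mem_biUnion, nbrP]
  constructor
  · rintro ⟨hne, p, hp, hadj⟩; exact ⟨p, hp, hne, hadj⟩
  · rintro ⟨p, hp, hne, hadj⟩; exact ⟨hne, p, hp, hadj⟩

lemma card_rowPairs_le : (rowPairs n).card ≤ n.choose 2 := by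
  classical
  have h := Finset.card_le_card_of_injOn
    (f := fun p : Fin n × Fin n => ({p.1, p.2} : Finset (Fin n)))
    (s := rowPairs n) (t := (univ : Finset (Fin n)).powersetCard 2) ?_ ?_
  · rwa [Finset.card_powersetCard, Finset.card_univ, Fintype.card_fin] at h
  · intro p hp
    have hlt : p.1 < p.2 := (Finset.mem_filter.mp hp).2
    rw [Finset.mem_coe, Finset.mem_powersetCard]
    refine ⟨Finset.subset_univ _, ?_⟩
    rw [Finset.card_insert_of_notMem (by simp [hlt.ne]), Finset.card_singleton]
  · intro p hp q hq heq
    simp only [Finset.coe_filter, Set.mem_setOf_eq, rowPairs, Finset.mem_univ, true_and] at hp hq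
    simp only at heq
    have h1 : p.1 ∈ ({q.1, q.2} : Finset (Fin n)) := by rw [← heq]; simp
    have h2 : p.2 ∈ ({q.1, q.2} : Finset (Fin n)) := by rw [← heq]; simp
    have h3 : q.1 ∈ ({p.1, p.2} : Finset (Fin n)) := by rw [heq]; simp
    simp only [Finset.mem_insert, Finset.mem_singleton] at h1 h2 h3
    have hp1 : p.1 = q.1 := by
      rcases h1 with h | h
      · exact h
      · exfalso
        rcases h3 with h' | h'
        · exact absurd (h'.trans h) hq.ne
        · rw [h'] at hq; rw [← h] at hq; exact absurd (hp.trans hq) (lt_irrefl _)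
    have hp2 : p.2 = q.2 := by
      rcases h2 with h | h
      · exact absurd (hp1.trans h.symm) hp.ne
      · exact h
    exact Prod.ext hp1 hp2

lemma exists_eigenvector {N : Type*} [Fintype N] [DecidableEq N] (M : Matrix N N ℝ) (x : ℝ)
    (hroot : M.charpoly.IsRoot x) : ∃ v : N → ℝ, v ≠ 0 ∧ M.mulVec v = x • v := by
  have h1 : (Polynomial.evalRingHom x) M.charpoly
      = ((Matrix.charmatrix M).map (Polynomial.evalRingHom x)).det := by
    rw [Matrix.charpoly]; exact RingHom.map_det _ _
  have h2 : (Matrix.charmatrix M).map (Polynomial.evalRingHom x)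
      = x • (1 : Matrix N N ℝ) - M := by
    ext a b
    by_cases hab : a = b
    · subst hab
      simp [Matrix.charmatrix_apply_eq, Matrix.map_apply, Matrix.one_apply_eq,
        Matrix.sub_apply, Matrix.smul_apply]
    · simp [Matrix.charmatrix_apply_ne _ _ _ hab, Matrix.map_apply, Matrix.one_apply_ne hab,
        Matrix.sub_apply, Matrix.smul_apply]
  have hdet : (x • (1 : Matrix N N ℝ) - M).det = 0 := by
    rw [← h2, ← h1]
    simpa [Polynomial.coe_evalRingHom] using hroot
  obtain ⟨v, hv, hMv⟩ := Matrix.exists_mulVec_eq_zero_iff.mpr hdet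
  refine ⟨v, hv, ?_⟩
  rw [Matrix.sub_mulVec, Matrix.smul_mulVec, Matrix.one_mulVec, sub_eq_zero] at hMv
  exact hMv.symm

lemma arith_key {x y : ℝ} (hx : 1 ≤ x) (hy : 2 ≤ y) :
    x*(x-1)/2 * (y*y + y) * (4*y^2) ≤ x*y*(x*y-1)/2 * (4*y^2 + 4*y + 1) := by
  have hy0 : 0 < y := by linarith
  have hx0 : 0 < x := by linarith
  have hfac : 0 ≤ (x*y) * (x*y + 4*y^3 - 4*y - 1) := by
    apply mul_nonneg
    · positivity
    · have h1 : 0 ≤ y * (y^2 - 4) := mul_nonneg hy0.le (by nlinarith [hy])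
      have h2 : 0 ≤ x*y := by positivity
      nlinarith [h1, h2, hy]
  nlinarith [hfac]

end S13

set_option maxHeartbeats 2000000 in
/-- for `Ω(n,d,F)` the `d`-regular square `n × n` binary matrices with
forbidden entries `F` (`d ≥ 2`, `ρ = nd ≥ 2`), the smallest eigenvalue
`λ_{|Ω|-1}^edge` of the edge-switch transition matrix satisfies
`λ_{|Ω|-1}^edge ≥ -(1/d + 1/(4d²))`, hence
`(1 + λ_{|Ω|-1}^edge)⁻¹ ≤ 4d²/(4d² - 4d - 1) ≤ 5/2`. -/
theorem stmt_13 {n d : ℕ} (hd : 2 ≤ d) (hnd : 2 ≤ n * d) (F : Finset (Fin n × Fin n))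
    (hne : Nonempty (OmegaType (fun _ : Fin n => d) (fun _ : Fin n => d) F))
    (lamE : ℕ → ℝ) (hEanti : Antitone lamE) (hE0 : lamE 0 = 1)
    (hEroots : (Pedge (fun _ : Fin n => d) (fun _ : Fin n => d) F (n * d)).charpoly.roots
      = (Multiset.range
          (Fintype.card (OmegaType (fun _ : Fin n => d) (fun _ : Fin n => d) F))).map lamE) :
    -(1 / (d : ℝ) + 1 / (4 * (d : ℝ) ^ 2)) ≤
        lamE (Fintype.card (OmegaType (fun _ : Fin n => d) (fun _ : Fin n => d) F) - 1) ∧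
    (1 + lamE (Fintype.card (OmegaType (fun _ : Fin n => d) (fun _ : Fin n => d) F) - 1))⁻¹
        ≤ 4 * (d : ℝ) ^ 2 / (4 * (d : ℝ) ^ 2 - 4 * (d : ℝ) - 1) ∧
    4 * (d : ℝ) ^ 2 / (4 * (d : ℝ) ^ 2 - 4 * (d : ℝ) - 1) ≤ 5 / 2 := by
  classical
  set P := Pedge (fun _ : Fin n => d) (fun _ : Fin n => d) F (n * d) with hP
  set N := Fintype.card (OmegaType (fun _ : Fin n => d) (fun _ : Fin n => d) F) with hNdef
  have hN : 0 < N := by haveI := hne; exact Fintype.card_pos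
  set lam := lamE (N - 1) with hlamdef
  -- basic numerics
  have hn1 : 1 ≤ n := Nat.pos_of_ne_zero (by rintro rfl; simp at hnd)
  have hdR : (2:ℝ) ≤ (d:ℝ) := by exact_mod_cast hd
  have hdpos : (0:ℝ) < d := by linarith
  have hnR : (1:ℝ) ≤ (n:ℝ) := by exact_mod_cast hn1
  set C : ℝ := (((n * d).choose 2 : ℕ) : ℝ) with hCdef
  have hCpos : 0 < C := by
    have h : 0 < (n * d).choose 2 := Nat.choose_pos hnd
    rw [hCdef]; exact_mod_cast h
  -- eigenvector
  have hroot : P.charpoly.IsRoot lam := by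
    have hmem : lam ∈ P.charpoly.roots := by
      rw [hEroots]
      exact Multiset.mem_map.mpr ⟨N - 1, Multiset.mem_range.mpr (by omega), rfl⟩
    exact (Polynomial.mem_roots'.mp hmem).2
  obtain ⟨v, hv0, hPv⟩ := S13.exists_eigenvector P lam hroot
  set S := ∑ A, v A * v A with hSdef
  have hSpos : 0 < S := by
    have hex : ∃ A₀, v A₀ ≠ 0 := by
      by_contra h; push_neg at h; exact hv0 (funext fun A => h A)
    obtain ⟨A₀, hA₀⟩ := hex
    have h1 : 0 < v A₀ * v A₀ := mul_self_pos.mpr hA₀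
    have h2 : v A₀ * v A₀ ≤ S :=
      Finset.single_le_sum (fun A _ => mul_self_nonneg (v A)) (Finset.mem_univ A₀)
    linarith
  set nbr : OmegaType (fun _ : Fin n => d) (fun _ : Fin n => d) F →
      Finset (OmegaType (fun _ : Fin n => d) (fun _ : Fin n => d) F) :=
    fun A => univ.filter (fun B' => B' ≠ A ∧ ∃ p ∈ rowPairs n, switchAdjIJ F p.1 p.2 A.val B'.val)
    with hnbr
  have hPapp : ∀ A B, P A B = if A = B then
      1 - ∑ _B' ∈ nbr A, C⁻¹
    else if ∃ p ∈ rowPairs n, switchAdjIJ F p.1 p.2 A.val B.val then C⁻¹ else 0 :=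
    fun A B => rfl
  -- row sums of P against v
  have hrow : ∀ A, (∑ B, P A B * v B)
      = (1 - ((nbr A).card : ℝ) * C⁻¹) * v A + C⁻¹ * ∑ B ∈ nbr A, v B := by
    intro A
    rw [← Finset.sum_erase_add _ _ (Finset.mem_univ A)]
    have hdiag : P A A = 1 - ((nbr A).card : ℝ) * C⁻¹ := by
      rw [hPapp A A, if_pos rfl, Finset.sum_const, nsmul_eq_mul]
    have hoffd : ∀ B ∈ univ.erase A, P A B * v B
        = (if B ∈ nbr A then C⁻¹ * v B else 0) := by
      intro B hB
      have hBA : B ≠ A := (Finset.mem_erase.mp hB).1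
      have hAB : ¬ A = B := fun h => hBA h.symm
      rw [hPapp A B, if_neg hAB]
      by_cases hcond : ∃ p ∈ rowPairs n, switchAdjIJ F p.1 p.2 A.val B.val
      · rw [if_pos hcond,
          if_pos (show B ∈ nbr A from Finset.mem_filter.mpr ⟨Finset.mem_univ _, hBA, hcond⟩)]
      · rw [if_neg hcond, zero_mul,
          if_neg (fun hmem => hcond (Finset.mem_filter.mp hmem).2.2)]
    rw [Finset.sum_congr rfl hoffd, Finset.sum_ite_mem]
    have hint : (univ.erase A) ∩ nbr A = nbr A := by
      refine Finset.inter_eq_right.mpr ?_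
      intro B hB
      exact Finset.mem_erase.mpr ⟨(Finset.mem_filter.mp hB).2.1, Finset.mem_univ B⟩
    rw [hint, hdiag, ← Finset.mul_sum]
    ring
  -- the quadratic form identity
  have hmv : ∀ A, (∑ B, P A B * v B) = lam * v A := by
    intro A
    have h := congrFun hPv A
    simpa [Matrix.mulVec, dotProduct, Pi.smul_apply, smul_eq_mul] using h
  have hquad : lam * S = S - C⁻¹ * (∑ A, ((nbr A).card : ℝ) * (v A * v A))
      + C⁻¹ * (∑ A, ∑ B ∈ nbr A, v A * v B) := by
    have hls : ∑ A, v A * (∑ B, P A B * v B) = lam * S := by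
      rw [Finset.sum_congr rfl (fun A _ => by rw [hmv A])]
      rw [hSdef, Finset.mul_sum]
      exact Finset.sum_congr rfl fun A _ => by ring
    calc lam * S = ∑ A, v A * (∑ B, P A B * v B) := hls.symm
      _ = ∑ A, (v A * v A - C⁻¹ * (((nbr A).card : ℝ) * (v A * v A))
            + C⁻¹ * (∑ B ∈ nbr A, v A * v B)) := by
          refine Finset.sum_congr rfl fun A _ => ?_
          rw [hrow A,
            show (∑ B ∈ nbr A, v A * v B) = v A * ∑ B ∈ nbr A, v B from
              (Finset.mul_sum _ _ _).symm]
          ring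
      _ = S - C⁻¹ * (∑ A, ((nbr A).card : ℝ) * (v A * v A))
            + C⁻¹ * (∑ A, ∑ B ∈ nbr A, v A * v B) := by
          rw [Finset.sum_add_distrib, Finset.sum_sub_distrib, ← Finset.mul_sum, ← Finset.mul_sum,
            ← hSdef]
  -- decomposition over row pairs
  have hcard_dec : ∀ A, ((nbr A).card : ℝ)
      = ∑ p ∈ rowPairs n, ((S13.nbrP F d p.1 p.2 A).card : ℝ) := by
    intro A
    have h : (nbr A).card = ∑ p ∈ rowPairs n, (S13.nbrP F d p.1 p.2 A).card := by
      rw [show nbr A = (rowPairs n).biUnion (fun p => S13.nbrP F d p.1 p.2 A) from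
        S13.nbr_eq_biUnion A]
      exact Finset.card_biUnion (S13.nbrP_disj A)
    rw [h]; push_cast; rfl
  have hsum_dec : ∀ A, (∑ B ∈ nbr A, v A * v B)
      = ∑ p ∈ rowPairs n, ∑ B ∈ S13.nbrP F d p.1 p.2 A, v A * v B := by
    intro A
    rw [show nbr A = (rowPairs n).biUnion (fun p => S13.nbrP F d p.1 p.2 A) from
      S13.nbr_eq_biUnion A]
    exact Finset.sum_biUnion (fun p hp q hq hpq =>
      S13.nbrP_disj A p (Finset.mem_coe.mp hp) q (Finset.mem_coe.mp hq) hpq)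
  -- per-pair bound
  have hperp : ∀ p ∈ rowPairs n,
      (∑ A, ((S13.nbrP F d p.1 p.2 A).card : ℝ) * (v A * v A))
        - (∑ A, ∑ B ∈ S13.nbrP F d p.1 p.2 A, v A * v B)
      ≤ ((d * d + d : ℕ) : ℝ) * S := by
    intro p hp
    have hplt : p.1 < p.2 := (Finset.mem_filter.mp hp).2
    have hgram := S13.gram (F := F) (d := d) hplt.ne v
    have hbound : ∀ A : OmegaType (fun _ : Fin n => d) (fun _ : Fin n => d) F,
        ((S13.nbrP F d p.1 p.2 A).card : ℝ) * (v A * v A)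
          + (usize F p.1 p.2 A.val : ℝ) * (v A * v A)
        ≤ ((d * d + d : ℕ) : ℝ) * (v A * v A) := by
      intro A
      have hc : (S13.nbrP F d p.1 p.2 A).card + usize F p.1 p.2 A.val ≤ d * d + d := by
        have h1 := S13.card_nbrP_le (F := F) hplt.ne A
        have h2 := S13.usize_le (F := F) A.2 p.1 p.2
        have h3 := S13.lsize_le (F := F) A.2 p.1 p.2
        have h4 : usize F p.1 p.2 A.val * lsize F p.1 p.2 A.val ≤ d * d :=
          Nat.mul_le_mul h2 h3
        omega
      have hcR : ((S13.nbrP F d p.1 p.2 A).card : ℝ) + (usize F p.1 p.2 A.val : ℝ)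
          ≤ ((d * d + d : ℕ) : ℝ) := by exact_mod_cast hc
      nlinarith [mul_self_nonneg (v A), hcR]
    have h1 : - (∑ A, ∑ B ∈ S13.nbrP F d p.1 p.2 A, v A * v B)
        ≤ ∑ A, (usize F p.1 p.2 A.val : ℝ) * (v A * v A) := by linarith [hgram]
    have h2 : (∑ A, ((S13.nbrP F d p.1 p.2 A).card : ℝ) * (v A * v A))
        + ∑ A, (usize F p.1 p.2 A.val : ℝ) * (v A * v A)
        ≤ ((d * d + d : ℕ) : ℝ) * S := by
      rw [hSdef, Finset.mul_sum, ← Finset.sum_add_distrib]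
      exact Finset.sum_le_sum fun A _ => hbound A
    linarith
  -- global bound on the Dirichlet-type term
  have hE : (∑ A, ((nbr A).card : ℝ) * (v A * v A)) - (∑ A, ∑ B ∈ nbr A, v A * v B)
      ≤ ((n.choose 2 : ℕ) : ℝ) * (((d * d + d : ℕ) : ℝ) * S) := by
    have hx : (∑ A, ((nbr A).card : ℝ) * (v A * v A))
        = ∑ p ∈ rowPairs n, ∑ A, ((S13.nbrP F d p.1 p.2 A).card : ℝ) * (v A * v A) := by
      rw [Finset.sum_congr rfl (fun A _ => by rw [hcard_dec A, Finset.sum_mul])]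
      exact Finset.sum_comm
    have hy : (∑ A, ∑ B ∈ nbr A, v A * v B)
        = ∑ p ∈ rowPairs n, ∑ A, ∑ B ∈ S13.nbrP F d p.1 p.2 A, v A * v B := by
      rw [Finset.sum_congr rfl (fun A _ => hsum_dec A)]
      exact Finset.sum_comm
    rw [hx, hy, ← Finset.sum_sub_distrib]
    calc ∑ p ∈ rowPairs n, ((∑ A, ((S13.nbrP F d p.1 p.2 A).card : ℝ) * (v A * v A))
            - (∑ A, ∑ B ∈ S13.nbrP F d p.1 p.2 A, v A * v B))
        ≤ ∑ _p ∈ rowPairs n, ((d * d + d : ℕ) : ℝ) * S := Finset.sum_le_sum hperp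
      _ = ((rowPairs n).card : ℝ) * (((d * d + d : ℕ) : ℝ) * S) := by
          rw [Finset.sum_const, nsmul_eq_mul]
      _ ≤ ((n.choose 2 : ℕ) : ℝ) * (((d * d + d : ℕ) : ℝ) * S) := by
          have hcc : ((rowPairs n).card : ℝ) ≤ ((n.choose 2 : ℕ) : ℝ) := by
            exact_mod_cast S13.card_rowPairs_le
          have hnn : (0:ℝ) ≤ ((d * d + d : ℕ) : ℝ) * S := by positivity
          exact mul_le_mul_of_nonneg_right hcc hnn
  -- conclude the eigenvalue bound
  have hlamS : (1 - C⁻¹ * (((n.choose 2 : ℕ) : ℝ) * ((d * d + d : ℕ) : ℝ))) * S ≤ lam * S := by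
    rw [hquad]
    have hCinv : (0:ℝ) ≤ C⁻¹ := inv_nonneg.mpr hCpos.le
    have := mul_le_mul_of_nonneg_left hE hCinv
    nlinarith [this]
  -- arithmetic : 1 - β/C ≥ -(1/d + 1/(4d²))
  have hc2n : 2 * ((n.choose 2 : ℕ) : ℝ) = (n:ℝ) * ((n:ℝ) - 1) := by
    have hdvd : 2 ∣ n * (n - 1) := by
      have h := Nat.even_mul_succ_self (n - 1)
      rw [Nat.sub_add_cancel hn1] at h
      exact (by rwa [mul_comm] at h : Even (n * (n - 1))).two_dvd
    have hnat : 2 * n.choose 2 = n * (n - 1) := by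
      rw [Nat.choose_two_right]; exact Nat.mul_div_cancel' hdvd
    calc 2 * ((n.choose 2 : ℕ) : ℝ) = ((2 * n.choose 2 : ℕ) : ℝ) := by push_cast; ring
      _ = ((n * (n - 1) : ℕ) : ℝ) := by rw [hnat]
      _ = (n:ℝ) * ((n:ℝ) - 1) := by
          rw [Nat.cast_mul, Nat.cast_sub hn1]; push_cast; ring
  have hnd1 : 1 ≤ n * d := by omega
  have hc2nd : 2 * C = ((n:ℝ) * (d:ℝ)) * ((n:ℝ) * (d:ℝ) - 1) := by
    have hdvd : 2 ∣ (n * d) * (n * d - 1) := by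
      have h := Nat.even_mul_succ_self (n * d - 1)
      rw [Nat.sub_add_cancel hnd1] at h
      exact (by rwa [mul_comm] at h : Even ((n * d) * (n * d - 1))).two_dvd
    have hnat : 2 * (n * d).choose 2 = (n * d) * (n * d - 1) := by
      rw [Nat.choose_two_right]; exact Nat.mul_div_cancel' hdvd
    calc 2 * C = ((2 * (n * d).choose 2 : ℕ) : ℝ) := by rw [hCdef]; push_cast; ring
      _ = (((n * d) * (n * d - 1) : ℕ) : ℝ) := by rw [hnat]
      _ = ((n:ℝ) * (d:ℝ)) * ((n:ℝ) * (d:ℝ) - 1) := by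
          rw [Nat.cast_mul, Nat.cast_sub hnd1]; push_cast; ring
  have hineq : ((n.choose 2 : ℕ) : ℝ) * ((d * d + d : ℕ) : ℝ)
      ≤ C * (1 + 1 / (d:ℝ) + 1 / (4 * (d:ℝ)^2)) := by
    have h4d : (0:ℝ) < 4 * (d:ℝ)^2 := by positivity
    have hform : 1 + 1/(d:ℝ) + 1/(4*(d:ℝ)^2) = (4*(d:ℝ)^2 + 4*(d:ℝ) + 1) / (4*(d:ℝ)^2) := by
      field_simp
    rw [hform, mul_div_assoc', le_div_iff₀ h4d]
    have hch : ((n.choose 2 : ℕ) : ℝ) = (n:ℝ)*((n:ℝ)-1)/2 := by linarith [hc2n]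
    have hCeq : C = (n:ℝ)*(d:ℝ)*((n:ℝ)*(d:ℝ)-1)/2 := by linarith [hc2nd]
    have hcast : ((d * d + d : ℕ) : ℝ) = (d:ℝ)*(d:ℝ) + (d:ℝ) := by push_cast; ring
    rw [hch, hCeq, hcast]
    exact S13.arith_key hnR hdR
  have hpart1 : -(1 / (d:ℝ) + 1 / (4 * (d:ℝ)^2)) ≤ lam := by
    have h2 : C⁻¹ * (((n.choose 2 : ℕ) : ℝ) * ((d * d + d : ℕ) : ℝ))
        ≤ 1 + 1/(d:ℝ) + 1/(4*(d:ℝ)^2) := by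
      rw [inv_mul_le_iff₀ hCpos]
      calc ((n.choose 2 : ℕ) : ℝ) * ((d * d + d : ℕ) : ℝ)
          ≤ C * (1 + 1 / (d:ℝ) + 1 / (4 * (d:ℝ)^2)) := hineq
        _ = C * (1 + 1 / (d:ℝ) + 1 / (4 * (d:ℝ)^2)) := rfl
    have h3 : (-(1 / (d:ℝ) + 1 / (4 * (d:ℝ)^2))) * S ≤ lam * S := by
      calc (-(1 / (d:ℝ) + 1 / (4 * (d:ℝ)^2))) * S
          ≤ (1 - C⁻¹ * (((n.choose 2 : ℕ) : ℝ) * ((d * d + d : ℕ) : ℝ))) * S := by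
            apply mul_le_mul_of_nonneg_right _ hSpos.le
            linarith
        _ ≤ lam * S := hlamS
    exact le_of_mul_le_mul_right h3 hSpos
  -- parts 2 and 3
  have h41 : (0:ℝ) < 4*(d:ℝ)^2 - 4*(d:ℝ) - 1 := by nlinarith [hdR]
  have h4d2 : (0:ℝ) < 4*(d:ℝ)^2 := by positivity
  refine ⟨hpart1, ?_, ?_⟩
  · have hfraceq : 1 - (1/(d:ℝ) + 1/(4*(d:ℝ)^2)) = (4*(d:ℝ)^2 - 4*(d:ℝ) - 1)/(4*(d:ℝ)^2) := by
      field_simp; ring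
    have hfrac : (4*(d:ℝ)^2 - 4*(d:ℝ) - 1)/(4*(d:ℝ)^2) ≤ 1 + lam := by
      rw [← hfraceq]; linarith [hpart1]
    have hfracpos : 0 < (4*(d:ℝ)^2 - 4*(d:ℝ) - 1)/(4*(d:ℝ)^2) := div_pos h41 h4d2
    have hinv := inv_anti₀ hfracpos hfrac
    rwa [inv_div] at hinv
  · rw [div_le_iff₀ h41]
    nlinarith [hdR]
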